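/- With M_σ for σ ∈ Σ defined as above, define additionally a 4×4 real matrix M_$ with row 0 = (0,0,1,0), row 1 = (0,0,0,1), row 2 = (0,0,1,0), row 3 = (0,0,0,1). Then for every finite word w = σ₁…σ_n over Σ, the row vector e₀ · M_{σ₁} ⋯ M_{σ_n} · M_$ equals (0, 0, 1 - 2^{-n}θ(w), 2^{-n}θ(w)); in particular the probability of being in the accepting absorbing state 3 after reading w followed by the end-marker is 2^{-n}θ(w). -/
import Mathlib


open Matrix

/-- `psi k (d₁ … d_n) = d_n/k + d_{n-1}/k² + ⋯ + d₁/kⁿ`. -/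
noncomputable def psi (k : ℕ) (l : List (Fin k)) : ℝ :=
  l.foldl (fun r a => (r + (a : ℝ)) / k) 0

/-- `theta` of a word is `psi` of the concatenation of the images of its letters. -/
noncomputable def theta (k : ℕ) {S : Type*} (φ : S → List (Fin k)) (w : List S) : ℝ :=
  psi k (w.map φ).flatten

/-- The transition matrix `M_σ` of the automaton `A_i` from the PCP instance. -/
noncomputable def Mmat (k : ℕ) {S : Type*} (φ : S → List (Fin k)) (σ : S) :
    Matrix (Fin 4) (Fin 4) ℝ :=
  !![(1/2) * (1 - psi k (φ σ)), (1/2) * psi k (φ σ), 1/2, 0;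
     (1/2) * (1 - psi k (φ σ) - ((k : ℝ) ^ (φ σ).length)⁻¹),
       (1/2) * (psi k (φ σ) + ((k : ℝ) ^ (φ σ).length)⁻¹), 1/2, 0;
     0, 0, 1, 0;
     0, 0, 0, 1]

/-- The transition matrix for the end-marker `$`. -/
noncomputable def Mdollar : Matrix (Fin 4) (Fin 4) ℝ :=
  !![0, 0, 1, 0;
     0, 0, 0, 1;
     0, 0, 1, 0;
     0, 0, 0, 1]

lemma foldlF (k : ℕ) (hk : (k:ℝ) ≠ 0) (l : List ℝ) (x : ℝ) :
    l.foldl (fun r a => (r + a) / (k:ℝ)) x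
      = x * ((k : ℝ) ^ l.length)⁻¹ + l.foldl (fun r a => (r + a) / (k:ℝ)) 0 := by
  induction l generalizing x with
  | nil => simp
  | cons a l ih =>
    rw [List.foldl_cons, List.foldl_cons, ih, ih ((0 + a)/k), List.length_cons]
    field_simp
    ring

lemma psi_def (k : ℕ) (l : List (Fin k)) :
    psi k l = (l.map (fun a : Fin k => ((a : ℕ) : ℝ))).foldl (fun r x => (r + x) / (k:ℝ)) 0 := by
  rw [psi]
  congr 1
  induction l with
  | nil => rfl
  | cons a l ih => simp only [List.map_cons]; rw [← ih]; rfl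

lemma psi_append (k : ℕ) (hk : (k:ℝ) ≠ 0) (l₁ l₂ : List (Fin k)) :
    psi k (l₁ ++ l₂) = psi k l₁ * ((k : ℝ) ^ l₂.length)⁻¹ + psi k l₂ := by
  rw [psi_def, psi_def, psi_def, List.map_append, List.foldl_append,
    foldlF k hk, List.length_map]

lemma invariant (k : ℕ) (hk : 2 ≤ k) (S : Type*) (φ : S → List (Fin k)) (w : List S) :
    w.foldl (fun v σ => Matrix.vecMul v (Mmat k φ σ)) ![(1 : ℝ), 0, 0, 0]
      = ![((2:ℝ)^w.length)⁻¹ * (1 - theta k φ w), ((2:ℝ)^w.length)⁻¹ * theta k φ w,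
          1 - ((2:ℝ)^w.length)⁻¹, 0] := by
  have hk0 : (k:ℝ) ≠ 0 := by positivity
  induction w using List.reverseRecOn with
  | nil => funext i; fin_cases i <;> simp [theta, psi]
  | append_singleton w σ ih =>
    rw [List.foldl_append, List.foldl_cons, List.foldl_nil, ih]
    have htheta : theta k φ (w ++ [σ])
        = theta k φ w * ((k : ℝ) ^ (φ σ).length)⁻¹ + psi k (φ σ) := by
      simp only [theta, List.map_append, List.flatten_append, List.map_cons, List.map_nil,
        List.flatten_cons, List.flatten_nil, List.append_nil]
      exact psi_append k hk0 _ _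
    funext i
    fin_cases i <;>
      simp [Matrix.vecMul, dotProduct, Mmat, Fin.sum_univ_four, htheta,
        List.length_append, pow_succ] <;> ring

theorem stmt3 (k : ℕ) (hk : 2 ≤ k) (S : Type*) (φ : S → List (Fin k)) (w : List S) :
    Matrix.vecMul
        (w.foldl (fun v σ => Matrix.vecMul v (Mmat k φ σ)) ![(1 : ℝ), 0, 0, 0]) Mdollar =
      ![0, 0, 1 - ((2 : ℝ) ^ w.length)⁻¹ * theta k φ w,
        ((2 : ℝ) ^ w.length)⁻¹ * theta k φ w] := by
  rw [invariant k hk S φ w]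
  funext i
  fin_cases i <;>
    simp [Matrix.vecMul, dotProduct, Mdollar, Fin.sum_univ_four] <;> ring
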